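/- Let ν := e₃ = (0,0,1) and let ξ ∈ ℂ³ satisfy ξᵀμξ = 0. Set ζ := ε⁻¹μξ, s := ξᵀεξ, m_ξ := ξᵀμε⁻¹μξ, and assume α·m_ξ + s ≠ 0. Define m := −2α·(νᵀμξ)/(α·m_ξ + s) and γ := ν + m·ζ. Define the directional derivative matrix M'(ξ) := α·[(ε⁻¹μν)(μξ)ᵀ + (ε⁻¹μξ)(μν)ᵀ] + 2(νᵀεξ)·I₃ − ν(εξ)ᵀ − ξ(εν)ᵀ. Then M(ξ)·γ + M'(ξ)·ξ = 0, i.e. γ is a generalised eigenvector of the matrix polynomial z ↦ M(ξ̃ + z·ν) at the root corresponding to ξ. -/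

import Mathlib

open Matrix

private lemma vecMulVec_mulVec' (u v w : Fin 3 → ℂ) :
    (vecMulVec u v).mulVec w = (v ⬝ᵥ w) • u := by
  ext i
  simp [vecMulVec_apply, mulVec, dotProduct, Finset.sum_mul, Finset.mul_sum, mul_assoc,
    mul_comm, mul_left_comm]

private lemma symm_dot (M : Matrix (Fin 3) (Fin 3) ℂ) (hM : Mᵀ = M) (x y : Fin 3 → ℂ) :
    M.mulVec x ⬝ᵥ y = x ⬝ᵥ M.mulVec y := by
  rw [dotProduct_mulVec, ← mulVec_transpose, hM]

private lemma map_symm (ε : Matrix (Fin 3) (Fin 3) ℝ) (hε : ε.PosDef) :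
    (ε.map Complex.ofReal)ᵀ = ε.map Complex.ofReal := by
  rw [← transpose_map]
  have h : εᵀ = ε := by
    have := hε.isHermitian
    rwa [IsHermitian, conjTranspose_eq_transpose_of_trivial] at this
  rw [h]

/-- The principal symbol `M_H(ξ)`: `M(ξ) = α (ε⁻¹μξ)(μξ)ᵀ + (ξᵀεξ) I − ξ(εξ)ᵀ`,
with `α = √(det ε / det μ)`. -/
noncomputable def MH (ε μ : Matrix (Fin 3) (Fin 3) ℝ) (ξ : Fin 3 → ℂ) :
    Matrix (Fin 3) (Fin 3) ℂ :=
  (Real.sqrt (ε.det / μ.det) : ℂ) •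
      vecMulVec (((ε.map Complex.ofReal)⁻¹ * μ.map Complex.ofReal).mulVec ξ)
        ((μ.map Complex.ofReal).mulVec ξ)
    + (ξ ⬝ᵥ (ε.map Complex.ofReal).mulVec ξ) • (1 : Matrix (Fin 3) (Fin 3) ℂ)
    - vecMulVec ξ ((ε.map Complex.ofReal).mulVec ξ)

/-- The derivative `M'(ξ) = (d/dt) M(ξ + tν)|_{t=0}` of the matrix polynomial,
with `ν = e₃`. -/
noncomputable def MH' (ε μ : Matrix (Fin 3) (Fin 3) ℝ) (ν ξ : Fin 3 → ℂ) :
    Matrix (Fin 3) (Fin 3) ℂ :=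
  (Real.sqrt (ε.det / μ.det) : ℂ) •
      (vecMulVec (((ε.map Complex.ofReal)⁻¹ * μ.map Complex.ofReal).mulVec ν)
          ((μ.map Complex.ofReal).mulVec ξ)
        + vecMulVec (((ε.map Complex.ofReal)⁻¹ * μ.map Complex.ofReal).mulVec ξ)
            ((μ.map Complex.ofReal).mulVec ν))
    + (2 * (ν ⬝ᵥ (ε.map Complex.ofReal).mulVec ξ)) • (1 : Matrix (Fin 3) (Fin 3) ℂ)
    - vecMulVec ν ((ε.map Complex.ofReal).mulVec ξ)
    - vecMulVec ξ ((ε.map Complex.ofReal).mulVec ν)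

/-- `γ = ν + m ζ` is a generalised eigenvector of the matrix polynomial
`z ↦ M(ξ̃ + zν)` at the root corresponding to `ξ`: `M(ξ)·γ + M'(ξ)·ξ = 0`. -/
theorem MH_generalised_eigenvector (ε μ : Matrix (Fin 3) (Fin 3) ℝ) (hε : ε.PosDef)
    (hμ : μ.PosDef) (ξ : Fin 3 → ℂ)
    (hμξ : ξ ⬝ᵥ (μ.map Complex.ofReal).mulVec ξ = 0)
    (hne : (Real.sqrt (ε.det / μ.det) : ℂ) *
          (ξ ⬝ᵥ (μ.map Complex.ofReal * (ε.map Complex.ofReal)⁻¹ *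
            μ.map Complex.ofReal).mulVec ξ)
        + ξ ⬝ᵥ (ε.map Complex.ofReal).mulVec ξ ≠ 0) :
    (MH ε μ ξ).mulVec
        ((![0, 0, 1] : Fin 3 → ℂ)
          + (-(2 * (Real.sqrt (ε.det / μ.det) : ℂ) *
                ((![0, 0, 1] : Fin 3 → ℂ) ⬝ᵥ (μ.map Complex.ofReal).mulVec ξ))
              / ((Real.sqrt (ε.det / μ.det) : ℂ) *
                    (ξ ⬝ᵥ (μ.map Complex.ofReal * (ε.map Complex.ofReal)⁻¹ *
                      μ.map Complex.ofReal).mulVec ξ)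
                  + ξ ⬝ᵥ (ε.map Complex.ofReal).mulVec ξ)) •
            ((ε.map Complex.ofReal)⁻¹ * μ.map Complex.ofReal).mulVec ξ)
      + (MH' ε μ ![0, 0, 1] ξ).mulVec ξ = 0 := by
  set A := ε.map Complex.ofReal with hA
  set B := μ.map Complex.ofReal with hB
  set a : ℂ := (Real.sqrt (ε.det / μ.det) : ℂ) with ha
  set ν : Fin 3 → ℂ := ![0, 0, 1] with hν
  set ζ : Fin 3 → ℂ := (A⁻¹ * B).mulVec ξ with hζ
  set s : ℂ := ξ ⬝ᵥ A.mulVec ξ with hs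
  set mξ : ℂ := ξ ⬝ᵥ (B * A⁻¹ * B).mulVec ξ with hmξ
  set t : ℂ := ν ⬝ᵥ B.mulVec ξ with ht
  set p : ℂ := ν ⬝ᵥ A.mulVec ξ with hp
  set m : ℂ := -(2 * a * t) / (a * mξ + s) with hm
  -- basic matrix facts
  have hAsym : Aᵀ = A := map_symm ε hε
  have hBsym : Bᵀ = B := map_symm μ hμ
  have hAdet : A.det ≠ 0 := by
    have : A.det = (ε.det : ℂ) := (RingHom.map_det Complex.ofRealHom ε).symm
    rw [this]
    simpa using hε.det_pos.ne'
  have hAinvsym : (A⁻¹)ᵀ = A⁻¹ := by rw [transpose_nonsing_inv, hAsym]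
  have hAζ : A.mulVec ζ = B.mulVec ξ := by
    rw [hζ, mulVec_mulVec, ← Matrix.mul_assoc, Matrix.mul_nonsing_inv _ (isUnit_iff_ne_zero.mpr hAdet), Matrix.one_mul]
  -- dot product facts
  have h2 : B.mulVec ξ ⬝ᵥ ζ = mξ := by
    rw [hmξ, Matrix.mul_assoc, ← mulVec_mulVec, symm_dot B hBsym]
  have h4 : A.mulVec ξ ⬝ᵥ ζ = 0 := by
    rw [symm_dot A hAsym, hAζ, hμξ]
  have h1 : B.mulVec ξ ⬝ᵥ ν = t := by rw [ht, dotProduct_comm]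
  have h3 : A.mulVec ξ ⬝ᵥ ν = p := by rw [hp, dotProduct_comm]
  have h5 : B.mulVec ξ ⬝ᵥ ξ = 0 := by rw [dotProduct_comm]; exact hμξ
  have h6 : B.mulVec ν ⬝ᵥ ξ = t := by rw [symm_dot B hBsym]
  have h7 : A.mulVec ξ ⬝ᵥ ξ = s := by rw [hs, dotProduct_comm]
  have h8 : A.mulVec ν ⬝ᵥ ξ = p := by rw [symm_dot A hAsym]
  have key : (MH ε μ ξ).mulVec (ν + m • ζ) + (MH' ε μ ν ξ).mulVec ξ
      = (2 * a * t + m * (a * mξ + s)) • ζ := by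
    simp only [MH, MH', ← hA, ← hB, ← ha, ← hζ, ← hs, ← hp, add_mulVec, sub_mulVec,
      smul_mulVec, one_mulVec, vecMulVec_mulVec', mulVec_add, mulVec_smul,
      dotProduct_add, dotProduct_smul, h1, h2, h3, h4, h5, h6, h7, h8, smul_eq_mul]
    module
  have hc : 2 * a * t + m * (a * mξ + s) = 0 := by
    rw [hm]
    field_simp
    ring
  rw [key, hc, zero_smul]
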